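/- For every natural number p, ∑_{k=0}^{p} v^{p(p+1)/2 - 2k(p-k+1)} [p choose k]_{v²} = [2p]_v!! / [p]_v! in ℚ(v). -/

import Mathlib

open scoped BigOperators
open Finset

noncomputable section

abbrev K : Type := RatFunc ℚ

def v : K := RatFunc.X

/-- Balanced quantum integer `[n]_v = (v^n - v^{-n})/(v - v⁻¹)`. -/
def qint (n : ℤ) : K := (v ^ n - v ^ (-n)) / (v - v⁻¹)

/-- Balanced quantum factorial `[n]_v!`. -/
def qfact : ℕ → K
  | 0 => 1
  | n + 1 => qfact n * qint ((n : ℤ) + 1)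

/-- Balanced Gaussian binomial coefficient `[p choose t]_v`. -/
def qbinom (p t : ℕ) : K := qfact p / (qfact t * qfact (p - t))

/-- Quantum double factorial `[2k]_v!! = [2k]_v [2k-2]_v ⋯ [2]_v`. -/
def ddfact : ℕ → K
  | 0 => 1
  | k + 1 => ddfact k * qint (2 * ((k : ℤ) + 1))


/-- Quantum integer with base x. -/
def qintAt (x : K) (n : ℤ) : K := (x ^ n - x ^ (-n)) / (x - x⁻¹)

def qfactAt (x : K) : ℕ → K
  | 0 => 1
  | n + 1 => qfactAt x n * qintAt x ((n : ℤ) + 1)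

/-- Balanced Gaussian binomial at base x. -/
def qbinomAt (x : K) (p t : ℕ) : K := qfactAt x p / (qfactAt x t * qfactAt x (p - t))

lemma v_ne : (v : K) ≠ 0 := RatFunc.X_ne_zero

lemma vpow_ne_one {m : ℕ} (hm : m ≠ 0) : (v : K) ^ m ≠ 1 := by
  intro h
  have : (Polynomial.X : Polynomial ℚ) ^ m = 1 := by
    apply RatFunc.algebraMap_injective ℚ
    rw [map_pow, map_one, RatFunc.algebraMap_X]
    exact_mod_cast h
  have h0 := congrArg (Polynomial.eval 0) this
  simp [Polynomial.eval_pow, zero_pow hm] at h0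

lemma vzpow_ne_one {m : ℤ} (hm : m ≠ 0) : (v : K) ^ m ≠ 1 := by
  rcases lt_or_gt_of_ne hm with h | h
  · intro he
    have : (v : K) ^ (-m) = 1 := by
      rw [zpow_neg, he, inv_one]
    have hmn : (-m).toNat ≠ 0 := by omega
    rw [show (-m) = ((-m).toNat : ℤ) by omega, zpow_natCast] at this
    exact vpow_ne_one hmn this
  · intro he
    have hmn : m.toNat ≠ 0 := by omega
    rw [show m = (m.toNat : ℤ) by omega, zpow_natCast] at he
    exact vpow_ne_one hmn he

lemma vzpow_sub_ne {a b : ℤ} (h : a ≠ b) : (v:K) ^ a - v ^ b ≠ 0 := by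
  intro he
  have h1 : (v:K) ^ a = v ^ b := by linear_combination he
  have : (v:K) ^ (a - b) = 1 := by
    rw [zpow_sub₀ v_ne, h1, div_self (zpow_ne_zero _ v_ne)]
  exact vzpow_ne_one (by omega) this

def x : K := v ^ 2

lemma x_zpow (n : ℤ) : (x : K) ^ n = v ^ (2 * n) := by
  rw [x, ← zpow_natCast v 2, ← zpow_mul]
  norm_num

lemma x_ne : (x : K) ≠ 0 := pow_ne_zero _ v_ne

lemma x_sub_inv_ne : x - x⁻¹ ≠ 0 := by
  have : x - x⁻¹ = v ^ (2:ℤ) - v ^ (-2:ℤ) := by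
    rw [show x⁻¹ = x ^ (-1:ℤ) by simp [zpow_neg], x_zpow,
      show x = x ^ (1:ℤ) by simp, x_zpow]
    norm_num
  rw [this]; exact vzpow_sub_ne (by omega)

lemma qintAt_x_ne {n : ℤ} (hn : n ≠ 0) : qintAt x n ≠ 0 := by
  unfold qintAt
  apply div_ne_zero _ x_sub_inv_ne
  rw [x_zpow, x_zpow]
  exact vzpow_sub_ne (by omega)

lemma qfactAt_x_ne (n : ℕ) : qfactAt x n ≠ 0 := by
  induction n with
  | zero => simp [qfactAt]
  | succ n ih =>
    rw [qfactAt]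
    exact mul_ne_zero ih (qintAt_x_ne (by omega))

lemma qintAt_add (a b : ℤ) :
    qintAt x (a + b) = x ^ a * qintAt x b + x ^ (-b) * qintAt x a := by
  unfold qintAt
  rw [← mul_div_assoc, ← mul_div_assoc, ← add_div]
  congr 1
  rw [neg_add, zpow_add₀ x_ne, zpow_add₀ x_ne]
  ring

def QQ : K := v ^ (-4 : ℤ)
def qq : K := v ^ (-2 : ℤ)

lemma QQ_ne : (QQ : K) ≠ 0 := zpow_ne_zero _ v_ne
lemma qq_ne : (qq : K) ≠ 0 := zpow_ne_zero _ v_ne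
lemma qq_sq : qq ^ 2 = QQ := by
  rw [qq, QQ, ← zpow_natCast (v ^ (-2:ℤ)) 2, ← zpow_mul]; norm_num

def gb : ℕ → ℕ → K
  | _, 0 => 1
  | 0, _+1 => 0
  | n+1, k+1 => gb n (k+1) + QQ ^ (n-k) * gb n k

lemma gb_zero : ∀ {n k : ℕ}, n < k → gb n k = 0 := by
  intro n
  induction n with
  | zero => intro k hk; match k, hk with | k+1, _ => rfl
  | succ n ih =>
    intro k hk
    match k, hk with
    | k+1, hk =>
      rw [gb, ih (by omega), ih (by omega)]
      ring

lemma gb_diag : ∀ n : ℕ, gb n n = 1 := by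
  intro n
  induction n with
  | zero => rfl
  | succ n ih => rw [gb, ih, gb_zero (by omega)]; simp

lemma gb_zero_right (n : ℕ) : gb n 0 = 1 := by cases n <;> rfl

lemma gb_pascalB (n k : ℕ) : gb (n+1) (k+1) = QQ ^ (k+1) * gb n (k+1) + gb n k := by
  induction n generalizing k with
  | zero =>
    match k with
    | 0 => norm_num [gb]
    | k+1 =>
      rw [gb_zero (show 1 < k+2 by omega), gb_zero (show 0 < k+2 by omega),
        gb_zero (show 0 < k+1 by omega)]
      ring
  | succ n ih =>
    match k with
    | 0 =>
      have d2 : gb (n+2) 1 = gb (n+1) 1 + QQ^(n+1) * gb (n+1) 0 := rfl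
      have d1 : gb (n+1) 1 = gb n 1 + QQ^n * gb n 0 := rfl
      have i1 := ih 0
      have e1 : QQ^(0+1) * gb n 1 + gb n 0 = gb n 1 + QQ^n * gb n 0 := i1.symm.trans d1
      rw [d2, d1, gb_zero_right, gb_zero_right]
      rw [gb_zero_right] at e1
      linear_combination (-1 : K) * e1
    | j+1 =>
      by_cases hj : j + 1 ≤ n
      · obtain ⟨m, hm⟩ : ∃ m, n = j + 1 + m := ⟨n-(j+1), by omega⟩
        subst hm
        have d2 : gb (j+1+m+2) (j+2)
            = gb (j+1+m+1) (j+2) + QQ^(j+1+m+1-(j+1)) * gb (j+1+m+1) (j+1) := rfl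
        have dA : gb (j+1+m+1) (j+2) = gb (j+1+m) (j+2) + QQ^(j+1+m-(j+1)) * gb (j+1+m) (j+1) := rfl
        have dB : gb (j+1+m+1) (j+1) = gb (j+1+m) (j+1) + QQ^(j+1+m-j) * gb (j+1+m) j := rfl
        have eA := (ih (j+1)).symm.trans dA
        have eB := (ih j).symm.trans dB
        rw [show j+1+m+1-(j+1) = m+1 from by omega] at d2
        rw [show j+1+m-(j+1) = m from by omega] at dA eA
        rw [show j+1+m-j = m+1 from by omega] at dB eB
        rw [d2, dA, dB]
        linear_combination (-1 : K) * eA - QQ^(m+1) * eB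
      · by_cases hj2 : j = n
        · subst hj2
          have d2 : gb (j+2) (j+2) = gb (j+1) (j+2) + QQ^(j+1-(j+1)) * gb (j+1) (j+1) := rfl
          rw [d2, gb_zero (show j+1 < j+2 by omega), show j+1-(j+1) = 0 from by omega]
          ring
        · rw [gb_zero (show n+2 < j+2 by omega), gb_zero (show n+1 < j+2 by omega),
            gb_zero (show n+1 < j+1 by omega)]
          ring

lemma QQpow (m : ℕ) : (QQ:K) ^ m = x ^ (-2 * (m:ℤ)) := by
  rw [QQ, ← zpow_natCast (v ^ (-4:ℤ)) m, ← zpow_mul, x_zpow]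
  congr 1; ring

lemma merge (a b : ℤ) (g : K) : x ^ a * (x ^ b * g) = x ^ (a+b) * g := by
  rw [← mul_assoc, ← zpow_add₀ x_ne]

def P (p k : ℕ) : K := x ^ ((k : ℤ) * ((p:ℤ) - (k:ℤ))) * gb p k

lemma P_pascal (p k : ℕ) (hk : k ≤ p) :
    P (p+1) (k+1) = x ^ ((k:ℤ)+1) * P p (k+1) + x ^ ((k:ℤ)-(p:ℤ)) * P p k := by
  have hgb : gb (p+1) (k+1) = gb p (k+1) + QQ^(p-k) * gb p k := rfl
  have hc : ((p - k : ℕ) : ℤ) = (p:ℤ) - k := by omega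
  rw [P, P, P, hgb, QQpow, hc, mul_add]
  simp only [merge]
  push_cast
  rw [show ((k:ℤ)+1) * ((p:ℤ)+1 - ((k:ℤ)+1)) + -2*((p:ℤ)-k) = (k:ℤ)-p + k*((p:ℤ)-k) from by ring,
    show ((k:ℤ)+1) * ((p:ℤ)+1 - ((k:ℤ)+1)) = (k:ℤ)+1 + ((k:ℤ)+1)*((p:ℤ)-((k:ℤ)+1)) from by ring]

lemma fact_eq (p : ℕ) : ∀ k, k ≤ p → qfactAt x p = P p k * (qfactAt x k * qfactAt x (p-k)) := by
  induction p with
  | zero =>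
    intro k hk
    interval_cases k
    simp [P, gb_zero_right, qfactAt]
  | succ p ih =>
    intro k hk
    match k with
    | 0 => simp [P, gb_zero_right, qfactAt]
    | k'+1 =>
      have hk' : k' ≤ p := by omega
      by_cases htop : k' = p
      · subst htop
        simp [P, gb_diag, qfactAt]
      · have hlt : k' < p := by omega
        have hsub : p + 1 - (k'+1) = p - k' := by omega
        have e0 : qfactAt x (p+1) = qfactAt x p * qintAt x ((p:ℤ)+1) := rfl
        have eadd := qintAt_add ((k':ℤ)+1) ((p:ℤ)-(k':ℤ))
        rw [show ((k':ℤ)+1) + ((p:ℤ)-(k':ℤ)) = (p:ℤ)+1 from by ring,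
          show -((p:ℤ)-(k':ℤ)) = (k':ℤ)-(p:ℤ) from by ring] at eadd
        have ePas := P_pascal p k' hk'
        have eF1 : qfactAt x (k'+1) = qfactAt x k' * qintAt x ((k':ℤ)+1) := rfl
        have eF2 : qfactAt x (p-k') = qfactAt x (p-k'-1) * qintAt x ((p:ℤ)-(k':ℤ)) := by
          rw [show p - k' = (p-k'-1)+1 from by omega]
          simp only [qfactAt]
          rw [show ((p-k'-1:ℕ):ℤ)+1 = (p:ℤ)-(k':ℤ) from by omega,
            show p - k' - 1 + 1 - 1 = p - k' - 1 from by omega]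
        have ihA := ih (k'+1) (by omega)
        rw [show p - (k'+1) = p - k' - 1 from by omega, eF1] at ihA
        have ihB := ih k' hk'
        rw [eF2] at ihB
        rw [hsub, e0, eadd, ePas, eF1, eF2]
        linear_combination (x^((k':ℤ)+1) * qintAt x ((p:ℤ)-(k':ℤ))) * ihA
          + (x^((k':ℤ)-(p:ℤ)) * qintAt x ((k':ℤ)+1)) * ihB

lemma qbinomAt_eq_P (p k : ℕ) (hk : k ≤ p) : qbinomAt x p k = P p k := by
  rw [qbinomAt, fact_eq p k hk,
    mul_div_cancel_right₀ _ (mul_ne_zero (qfactAt_x_ne k) (qfactAt_x_ne (p-k)))]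

def hh (n : ℕ) (t : K) : K := ∑ k ∈ range (n+1), t^k * gb n k

lemma gb_succ_succ (n k : ℕ) : gb (n+1) (k+1) = gb n (k+1) + QQ^(n-k) * gb n k := rfl

lemma hh_top_drop (n : ℕ) (s : K) :
    ∑ k ∈ range (n+1), s^(k+1) * gb n (k+1) = ∑ k ∈ range n, s^(k+1) * gb n (k+1) := by
  rw [Finset.sum_range_succ, gb_zero (Nat.lt_succ_self n)]
  ring

lemma hh_shift (n : ℕ) (s : K) : hh n s = ∑ k ∈ range n, s^(k+1) * gb n (k+1) + 1 := by
  rw [hh, Finset.sum_range_succ']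
  simp [gb_zero_right]

lemma hh_A (n : ℕ) (t : K) :
    hh (n+1) t = hh n t + t * QQ^n * hh n (t * QQ⁻¹) := by
  rw [hh, Finset.sum_range_succ']
  simp only [gb_succ_succ, pow_zero, one_mul, gb_zero_right]
  have split : ∀ k ∈ range (n+1), t^(k+1) * (gb n (k+1) + QQ^(n-k) * gb n k)
      = t^(k+1) * gb n (k+1) + (t*QQ^n) * ((t*QQ⁻¹)^k * gb n k) := by
    intro k hk
    have hkn : k ≤ n := by
      have := Finset.mem_range.mp hk; omega
    have hq : (QQ:K)^(n-k) = QQ^n * (QQ⁻¹)^k := by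
      rw [inv_pow, pow_sub₀ _ QQ_ne hkn]
    rw [hq, mul_pow]
    ring
  rw [Finset.sum_congr rfl split, Finset.sum_add_distrib, ← Finset.mul_sum]
  rw [hh_shift n t, hh_top_drop n t]
  rw [show hh n (t * QQ⁻¹) = ∑ k ∈ range (n+1), (t*QQ⁻¹)^k * gb n k from rfl]
  ring

lemma hh_B (n : ℕ) (t : K) :
    hh (n+1) t = t * hh n t + hh n (t * QQ) := by
  rw [hh, Finset.sum_range_succ']
  simp only [pow_zero, one_mul, gb_zero_right]
  have split : ∀ k ∈ range (n+1), t^(k+1) * gb (n+1) (k+1)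
      = (t*QQ)^(k+1) * gb n (k+1) + t * (t^k * gb n k) := by
    intro k hk
    rw [gb_pascalB, mul_pow]
    ring
  rw [Finset.sum_congr rfl split, Finset.sum_add_distrib, ← Finset.mul_sum]
  rw [hh_top_drop n (t*QQ)]
  have e2 := hh_shift n (t*QQ)
  rw [show hh n t = ∑ k ∈ range (n+1), t^k * gb n k from rfl, e2]
  ring

lemma hh_RS (n : ℕ) (t : K) :
    hh (n+2) t = (1+t) * hh (n+1) t - t * (1 - QQ^(n+1)) * hh n t := by
  have b1 := hh_B (n+1) t
  have a0 := hh_A n (t * QQ)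
  rw [mul_assoc t QQ QQ⁻¹, mul_inv_cancel₀ QQ_ne, mul_one] at a0
  have b0 := hh_B n t
  rw [b1, a0, ← sub_eq_iff_eq_add'.mpr b0]
  ring

lemma hh_prod (n : ℕ) : hh n qq = ∏ i ∈ range n, (1 + qq^(i+1)) := by
  induction n using Nat.twoStepInduction with
  | zero => simp [hh, gb_zero_right]
  | one =>
    rw [show hh 1 qq = qq^0 * gb 1 0 + qq^1 * gb 1 1 from by
      simp [hh, Finset.sum_range_succ], gb_zero_right, gb_diag]
    simp
  | more n ih1 ih2 =>
    rw [hh_RS, ih1, ih2, Finset.prod_range_succ, Finset.prod_range_succ,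
      Finset.prod_range_succ, ← qq_sq]
    ring

lemma qqpow (m : ℕ) : (qq:K) ^ m = v ^ (-2 * (m:ℤ)) := by
  rw [qq, ← zpow_natCast (v ^ (-2:ℤ)) m, ← zpow_mul]

lemma v_sub_inv_ne : (v:K) - v⁻¹ ≠ 0 := by
  have h : (v:K) - v⁻¹ = v^(1:ℤ) - v^(-1:ℤ) := by
    rw [zpow_one, zpow_neg_one]
  rw [h]; exact vzpow_sub_ne (by omega)

lemma qint_ne {n : ℤ} (hn : n ≠ 0) : qint n ≠ 0 := by
  unfold qint
  exact div_ne_zero (vzpow_sub_ne (by omega)) v_sub_inv_ne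

lemma qfact_ne (p : ℕ) : qfact p ≠ 0 := by
  induction p with
  | zero => simp [qfact]
  | succ p ih =>
    rw [qfact]
    exact mul_ne_zero ih (qint_ne (by omega))

lemma qint_double (m : ℤ) : qint (2*m) = (v^m + v^(-m)) * qint m := by
  unfold qint
  rw [← mul_div_assoc]
  congr 1
  rw [two_mul, zpow_add₀ v_ne, neg_add, zpow_add₀ v_ne]
  ring

lemma rhs_eq (p : ℕ) : ddfact p / qfact p
    = v ^ ((p:ℤ)*((p:ℤ)+1)/2) * ∏ i ∈ range p, (1 + qq^(i+1)) := by
  induction p with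
  | zero => norm_num [ddfact, qfact]
  | succ p ih =>
    obtain ⟨a, ha⟩ := Int.even_mul_succ_self (p:ℤ)
    have hT : ((p+1:ℕ):ℤ)*(((p+1:ℕ):ℤ)+1)/2 = (p:ℤ)*((p:ℤ)+1)/2 + ((p:ℤ)+1) := by
      push_cast
      rw [show (p:ℤ)*((p:ℤ)+1) = 2*a from by linarith,
        show ((p:ℤ)+1)*((p:ℤ)+1+1) = 2*(a + ((p:ℤ)+1)) from by linear_combination ha,
        Int.mul_ediv_cancel_left _ two_ne_zero, Int.mul_ediv_cancel_left _ two_ne_zero]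
    have hdd : ddfact (p+1) = ddfact p * qint (2*((p:ℤ)+1)) := rfl
    have hqf : qfact (p+1) = qfact p * qint ((p:ℤ)+1) := rfl
    have hA : v^((p:ℤ)+1) * (1 + qq^(p+1)) = v^((p:ℤ)+1) + v^(-((p:ℤ)+1)) := by
      rw [qqpow, mul_add, mul_one, ← zpow_add₀ v_ne]
      congr 2
      push_cast
      ring
    rw [hdd, hqf, qint_double ((p:ℤ)+1),
      show ddfact p * ((v^((p:ℤ)+1) + v^(-((p:ℤ)+1))) * qint ((p:ℤ)+1))
        = (ddfact p * (v^((p:ℤ)+1) + v^(-((p:ℤ)+1)))) * qint ((p:ℤ)+1) from by ring,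
      mul_div_mul_right _ _ (qint_ne (show (p:ℤ)+1 ≠ 0 by omega)),
      mul_comm (ddfact p) _, mul_div_assoc, ih, hT,
      zpow_add₀ v_ne ((p:ℤ)*((p:ℤ)+1)/2) ((p:ℤ)+1),
      Finset.prod_range_succ, ← hA]
    ring

theorem sum_qbinom_vsq_eq_ddfact_div_qfact (p : ℕ) :
    ∑ k ∈ range (p + 1),
      v ^ (((p : ℤ) * ((p : ℤ) + 1)) / 2 - 2 * (k : ℤ) * ((p : ℤ) - (k : ℤ) + 1))
        * qbinomAt (v ^ 2) p k
    = ddfact p / qfact p := by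
  have hterm : ∀ k ∈ range (p + 1),
      v ^ (((p : ℤ) * ((p : ℤ) + 1)) / 2 - 2 * (k : ℤ) * ((p : ℤ) - (k : ℤ) + 1))
        * qbinomAt (v ^ 2) p k
      = v ^ (((p : ℤ) * ((p : ℤ) + 1)) / 2) * (qq^k * gb p k) := by
    intro k hk
    have hk' : k ≤ p := by have := Finset.mem_range.mp hk; omega
    rw [show ((v:K) ^ 2) = x from rfl, qbinomAt_eq_P p k hk', P, x_zpow, qqpow,
      ← mul_assoc, ← zpow_add₀ v_ne,
      show ∀ (a b : ℤ) (g : K), v ^ a * (v ^ b * g) = v ^ (a+b) * g from fun a b g => by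
        rw [← mul_assoc, ← zpow_add₀ v_ne]]
    congr 2
    ring
  rw [Finset.sum_congr rfl hterm, ← Finset.mul_sum,
    show (∑ k ∈ range (p+1), qq^k * gb p k) = hh p qq from rfl,
    hh_prod, ← rhs_eq]
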